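/- If the vMDP is regular, then all basic feasible solutions of the state-action frequency linear program are non-degenerate: each contains exactly m = S·T nonzero components. -/

import Mathlib

open Finset

/-- A finite-horizon MDP with `N` states, horizon `T` (epochs `0,…,T-1`, so `T ≥ 2` has at
least one decision epoch), action sets `Fin (k s)` for each state `s`, and transition
probabilities `p t s a j = p_t(j | s, a)` governing the move from epoch `t` to `t+1`,
together with a strictly positive initial distribution `α`. -/
structure MDP (N T : ℕ) (k : Fin N → ℕ) : Type where
  p : ℕ → (s : Fin N) → Fin (k s) → Fin N → ℝ
  α : Fin N → ℝ
  p_nonneg : ∀ t s a j, 0 ≤ p t s a j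
  p_sum : ∀ t s a, ∑ j, p t s a j = 1
  α_pos : ∀ s, 0 < α s
  α_sum : ∑ s, α s = 1

/-- A (randomized, Markov, non-stationary) policy: `q t s a` is the probability that
action `a` is chosen in state `s` at decision epoch `t`. -/
structure Policy (N : ℕ) (k : Fin N → ℕ) : Type where
  q : ℕ → (s : Fin N) → Fin (k s) → ℝ
  q_nonneg : ∀ t s a, 0 ≤ q t s a
  q_sum : ∀ t s, ∑ a, q t s a = 1

variable {N T : ℕ} {k : Fin N → ℕ}

/-- `condProb M π j t s` is `P^π(S_t = s | S_0 = j)` (epochs indexed from 0). -/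
def condProb (M : MDP N T k) (π : Policy N k) (j : Fin N) : ℕ → Fin N → ℝ
  | 0, s => if s = j then 1 else 0
  | t+1, s => ∑ s', ∑ a, condProb M π j t s' * π.q t s' a * M.p t s' a s

/-- The state-action frequency `x_{π,t}(s,a) = ∑_j α(j) P^π(S_t = s, A_t = a | S_0 = j)`
(epochs indexed from 0, so the decision epochs are `0,…,T-2`). -/
def xsa (M : MDP N T k) (π : Policy N k) (t : ℕ) (s : Fin N) (a : Fin (k s)) : ℝ :=
  ∑ j, M.α j * condProb M π j t s * π.q t s a

/-- The terminal state frequency `x_{π,T}(s)` (terminal epoch is `T-1` in 0-based indexing). -/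
def xT (M : MDP N T k) (π : Policy N k) (s : Fin N) : ℝ :=
  ∑ j, M.α j * condProb M π j (T-1) s

variable (TT : ℕ)

/-- The finite-dimensional space housing state-action frequency vectors for a horizon
`TT + 2` process: a component `x.1 t s a` for every decision epoch `t ∈ {0,…,TT}`, state
`s` and action `a`, and a terminal component `x.2 s` for every state `s`. -/
abbrev FreqSpace (N : ℕ) (k : Fin N → ℕ) (TT : ℕ) : Type :=
  (Fin (TT+1) → (s : Fin N) → Fin (k s) → ℝ) × (Fin N → ℝ)

/-- Membership in the state-action frequency polytope `P`: nonnegativity together with the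
initial condition (a), flow conservation (b), and the terminal condition (c). -/
def inP {N : ℕ} {k : Fin N → ℕ} {TT : ℕ} (M : MDP N (TT+2) k)
    (x : FreqSpace N k TT) : Prop :=
  (∀ t s a, 0 ≤ x.1 t s a) ∧ (∀ s, 0 ≤ x.2 s) ∧
  (∀ j, ∑ a, x.1 0 j a = M.α j) ∧
  (∀ (t : Fin TT) (j : Fin N),
    ∑ a, x.1 t.succ j a = ∑ s, ∑ a, M.p (t : ℕ) s a j * x.1 t.castSucc s a) ∧
  (∀ j, x.2 j = ∑ s, ∑ a, M.p TT s a j * x.1 (Fin.last TT) s a)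

/-- The state-action frequency polytope `P`. -/
def Pset {N : ℕ} {k : Fin N → ℕ} {TT : ℕ} (M : MDP N (TT+2) k) :
    Set (FreqSpace N k TT) :=
  {x | inP M x}

/-- The state-action frequency vector `x_π` of a policy, as a point of `FreqSpace`. -/
def xvec {N : ℕ} {k : Fin N → ℕ} {TT : ℕ} (M : MDP N (TT+2) k) (π : Policy N k) :
    FreqSpace N k TT :=
  (fun t s a => xsa M π (t : ℕ) s a, fun s => xT M π s)

/-- The process is regular when every policy can reach every state at every epoch. -/
def RegularProcess {N : ℕ} {k : Fin N → ℕ} {TT : ℕ} (M : MDP N (TT+2) k) : Prop :=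
  ∀ (π : Policy N k) (t : ℕ) (s : Fin N), t ≤ TT + 1 → ∃ j, 0 < condProb M π j t s

/-- A policy is deterministic (up to the horizon) if at every decision epoch and state it
puts probability one on a single action. -/
def Deterministic {N : ℕ} (k : Fin N → ℕ) (TT : ℕ) (π : Policy N k) : Prop :=
  ∀ t s, t ≤ TT → ∃ a, π.q t s a = 1

/-- A policy is regular if at every decision epoch and every state unreachable there, it
puts full mass on the first action. -/
def RegularPol {N : ℕ} {k : Fin N → ℕ} {TT : ℕ} (M : MDP N (TT+2) k)
    (hk : ∀ s, 1 ≤ k s) (π : Policy N k) : Prop :=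
  ∀ t s, t ≤ TT → (∀ j, condProb M π j t s = 0) → π.q t s ⟨0, hk s⟩ = 1


section Proof14

variable {N TT : ℕ} {k : Fin N → ℕ}

lemma condProb_nonneg {T : ℕ} (M : MDP N T k) (π : Policy N k) (j : Fin N) :
    ∀ (t : ℕ) (s : Fin N), 0 ≤ condProb M π j t s
  | 0, s => by unfold condProb; split <;> norm_num
  | t+1, s => by
    unfold condProb
    refine Finset.sum_nonneg fun s' _ => Finset.sum_nonneg fun a _ => ?_
    exact mul_nonneg (mul_nonneg (condProb_nonneg M π j t s') (π.q_nonneg _ _ _))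
      (M.p_nonneg _ _ _ _)

lemma xsa_nonneg {T : ℕ} (M : MDP N T k) (π : Policy N k) (t : ℕ) (s : Fin N)
    (a : Fin (k s)) : 0 ≤ xsa M π t s a := by
  refine Finset.sum_nonneg fun i _ => ?_
  exact mul_nonneg (mul_nonneg (M.α_pos i).le (condProb_nonneg M π i t s)) (π.q_nonneg _ _ _)

lemma sum_xsa {T : ℕ} (M : MDP N T k) (π : Policy N k) (t : ℕ) (s : Fin N) :
    ∑ a, xsa M π t s a = ∑ j, M.α j * condProb M π j t s := by
  unfold xsa
  rw [Finset.sum_comm]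
  refine Finset.sum_congr rfl fun j _ => ?_
  rw [← Finset.mul_sum, π.q_sum, mul_one]

lemma alpha_condProb_succ {T : ℕ} (M : MDP N T k) (π : Policy N k) (t : ℕ) (s : Fin N) :
    ∑ j, M.α j * condProb M π j (t+1) s
      = ∑ s', ∑ a, M.p t s' a s * xsa M π t s' a := by
  unfold condProb xsa
  simp_rw [Finset.mul_sum]
  rw [Finset.sum_comm]
  refine Finset.sum_congr rfl fun s' _ => ?_
  rw [Finset.sum_comm]
  refine Finset.sum_congr rfl fun a _ => ?_
  refine Finset.sum_congr rfl fun j _ => ?_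
  ring

lemma xvec_mem_P (M : MDP N (TT+2) k) (π : Policy N k) : xvec M π ∈ Pset M := by
  refine ⟨fun t s a => xsa_nonneg M π _ s a, fun s => ?_, fun j => ?_, fun t j => ?_, fun j => ?_⟩
  · show 0 ≤ xT M π s
    exact Finset.sum_nonneg fun i _ =>
      mul_nonneg (M.α_pos i).le (condProb_nonneg M π i _ s)
  · show ∑ a, xsa M π 0 j a = M.α j
    rw [sum_xsa]
    simp [condProb, mul_ite]
  · show ∑ a, xsa M π (t.succ : ℕ) j a = ∑ s, ∑ a, M.p (t : ℕ) s a j * xsa M π (t.castSucc : ℕ) s a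
    rw [sum_xsa]
    rw [Fin.val_succ, Fin.coe_castSucc]
    exact alpha_condProb_succ M π t j
  · show xT M π j = ∑ s, ∑ a, M.p TT s a j * xsa M π (Fin.last TT : ℕ) s a
    unfold xT
    show ∑ i, M.α i * condProb M π i (TT+1) j = _
    rw [alpha_condProb_succ]
    rfl

/-- The policy induced by a point of the polytope. -/
noncomputable def indPol (M : MDP N (TT+2) k) (hk : ∀ s, 1 ≤ k s) (x : FreqSpace N k TT)
    (hx : inP M x) : Policy N k where
  q := fun t s a =>
    if h : t < TT + 1 then
      (if 0 < ∑ a', x.1 ⟨t, h⟩ s a' then x.1 ⟨t, h⟩ s a / ∑ a', x.1 ⟨t, h⟩ s a'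
       else if a = ⟨0, hk s⟩ then 1 else 0)
    else if a = ⟨0, hk s⟩ then 1 else 0
  q_nonneg := by
    intro t s a
    split_ifs with h hp h1 h2
    · exact div_nonneg (hx.1 _ _ _) hp.le
    · norm_num
    · norm_num
    · norm_num
    · norm_num
  q_sum := by
    intro t s
    split_ifs with h hp
    · rw [← Finset.sum_div, div_self hp.ne']
    · simp
    · simp

lemma indPol_q_pos (M : MDP N (TT+2) k) (hk : ∀ s, 1 ≤ k s) (x : FreqSpace N k TT)
    (hx : inP M x) (t : ℕ) (h : t < TT + 1) (s : Fin N)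
    (hp : 0 < ∑ a', x.1 ⟨t, h⟩ s a') (a : Fin (k s)) :
    (indPol M hk x hx).q t s a = x.1 ⟨t, h⟩ s a / ∑ a', x.1 ⟨t, h⟩ s a' := by
  show dite _ _ _ = _
  rw [dif_pos h, if_pos hp]

lemma sum_mul_q (M : MDP N (TT+2) k) (hk : ∀ s, 1 ≤ k s) (x : FreqSpace N k TT)
    (hx : inP M x) (t : ℕ) (h : t < TT + 1) (s : Fin N) (a : Fin (k s)) :
    (∑ a', x.1 ⟨t, h⟩ s a') * (indPol M hk x hx).q t s a = x.1 ⟨t, h⟩ s a := by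
  by_cases hp : 0 < ∑ a', x.1 ⟨t, h⟩ s a'
  · rw [indPol_q_pos M hk x hx t h s hp a, mul_div_cancel₀ _ hp.ne']
  · have hz : ∑ a', x.1 ⟨t, h⟩ s a' = 0 :=
      le_antisymm (not_lt.1 hp) (Finset.sum_nonneg fun a' _ => hx.1 _ _ _)
    have hxa : x.1 ⟨t, h⟩ s a = 0 := by
      have := (Finset.sum_eq_zero_iff_of_nonneg (fun a' _ => hx.1 ⟨t, h⟩ s a')).1 hz
      exact this a (Finset.mem_univ a)
    rw [hz, hxa, zero_mul]

lemma indPol_xsa (M : MDP N (TT+2) k) (hk : ∀ s, 1 ≤ k s) (x : FreqSpace N k TT)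
    (hx : inP M x) (t : ℕ) (h : t < TT + 1) (s : Fin N) (a : Fin (k s))
    (hF : ∑ j, M.α j * condProb M (indPol M hk x hx) j t s = ∑ a', x.1 ⟨t, h⟩ s a') :
    xsa M (indPol M hk x hx) t s a = x.1 ⟨t, h⟩ s a := by
  unfold xsa
  rw [← Finset.sum_mul, hF, sum_mul_q M hk x hx t h s a]

lemma F_eq (M : MDP N (TT+2) k) (hk : ∀ s, 1 ≤ k s) (x : FreqSpace N k TT)
    (hx : inP M x) :
    ∀ (t : ℕ) (h : t < TT + 1) (s : Fin N),
      ∑ j, M.α j * condProb M (indPol M hk x hx) j t s = ∑ a, x.1 ⟨t, h⟩ s a := by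
  intro t
  induction t with
  | zero =>
    intro h s
    have h0 : (⟨0, h⟩ : Fin (TT+1)) = 0 := by simp [Fin.ext_iff]
    rw [h0, hx.2.2.1 s]
    simp [condProb, mul_ite]
  | succ t ih =>
    intro h s
    have ht : t < TT + 1 := by omega
    have htT : t < TT := by omega
    rw [alpha_condProb_succ]
    have hxs : ∀ (s' : Fin N) (a : Fin (k s')),
        xsa M (indPol M hk x hx) t s' a = x.1 ⟨t, ht⟩ s' a :=
      fun s' a => indPol_xsa M hk x hx t ht s' a (ih ht s')
    have hb := hx.2.2.2.1 ⟨t, htT⟩ s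
    have hsu : ((⟨t, htT⟩ : Fin TT).succ : Fin (TT+1)) = ⟨t+1, h⟩ := rfl
    have hcs : ((⟨t, htT⟩ : Fin TT).castSucc : Fin (TT+1)) = ⟨t, ht⟩ := rfl
    rw [hsu, hcs, show ((⟨t, htT⟩ : Fin TT) : ℕ) = t from rfl] at hb
    simp_rw [hxs]
    exact hb.symm

lemma F_last (M : MDP N (TT+2) k) (hk : ∀ s, 1 ≤ k s) (x : FreqSpace N k TT)
    (hx : inP M x) (s : Fin N) :
    ∑ j, M.α j * condProb M (indPol M hk x hx) j (TT+1) s = x.2 s := by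
  rw [alpha_condProb_succ, hx.2.2.2.2 s]
  refine Finset.sum_congr rfl fun s' _ => Finset.sum_congr rfl fun a _ => ?_
  congr 1
  exact indPol_xsa M hk x hx TT (by omega) s' a (F_eq M hk x hx TT (by omega) s')

/-- Modify a policy at a single epoch and state. -/
def modPol (π : Policy N k) (t0 : ℕ) (s0 : Fin N) (r : Fin (k s0) → ℝ)
    (hr0 : ∀ a, 0 ≤ r a) (hr1 : ∑ a, r a = 1) : Policy N k where
  q := fun t => if t = t0 then Function.update (π.q t0) s0 r else π.q t
  q_nonneg := by
    intro t s a
    split_ifs with h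
    · rcases eq_or_ne s s0 with rfl | hs
      · rw [Function.update_self]; exact hr0 a
      · rw [Function.update_of_ne hs]; exact π.q_nonneg _ _ _
    · exact π.q_nonneg _ _ _
  q_sum := by
    intro t s
    split_ifs with h
    · rcases eq_or_ne s s0 with rfl | hs
      · rw [Function.update_self]; exact hr1
      · rw [Function.update_of_ne hs]; exact π.q_sum _ _
    · exact π.q_sum _ _

lemma modPol_q_ne (π : Policy N k) (t0 : ℕ) (s0 : Fin N) (r : Fin (k s0) → ℝ)
    (hr0 : ∀ a, 0 ≤ r a) (hr1 : ∑ a, r a = 1) {t : ℕ} (ht : t ≠ t0) :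
    (modPol π t0 s0 r hr0 hr1).q t = π.q t := by
  simp [modPol, ht]

lemma modPol_q_self (π : Policy N k) (t0 : ℕ) (s0 : Fin N) (r : Fin (k s0) → ℝ)
    (hr0 : ∀ a, 0 ≤ r a) (hr1 : ∑ a, r a = 1) :
    (modPol π t0 s0 r hr0 hr1).q t0 s0 = r := by
  simp [modPol]

lemma modPol_q_ne_s (π : Policy N k) (t0 : ℕ) (s0 : Fin N) (r : Fin (k s0) → ℝ)
    (hr0 : ∀ a, 0 ≤ r a) (hr1 : ∑ a, r a = 1) {s : Fin N} (hs : s ≠ s0) :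
    (modPol π t0 s0 r hr0 hr1).q t0 s = π.q t0 s := by
  simp [modPol, Function.update_of_ne hs]

lemma modPol_condProb_le {T : ℕ} (M : MDP N T k) (π : Policy N k) (t0 : ℕ) (s0 : Fin N)
    (r : Fin (k s0) → ℝ) (hr0 : ∀ a, 0 ≤ r a) (hr1 : ∑ a, r a = 1) :
    ∀ t, t ≤ t0 → ∀ (j s : Fin N),
      condProb M (modPol π t0 s0 r hr0 hr1) j t s = condProb M π j t s := by
  intro t
  induction t with
  | zero => intro _ j s; rfl
  | succ t ih =>
    intro ht j s
    show ∑ s', ∑ a, _ = ∑ s', ∑ a, _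
    refine Finset.sum_congr rfl fun s' _ => Finset.sum_congr rfl fun a _ => ?_
    rw [ih (by omega) j s', modPol_q_ne π t0 s0 r hr0 hr1 (by omega)]

lemma modPol_combo {T : ℕ} (M : MDP N T k) (π : Policy N k) (t0 : ℕ) (s0 : Fin N)
    (r₁ r₂ : Fin (k s0) → ℝ) (h01 : ∀ a, 0 ≤ r₁ a) (h02 : ∀ a, 0 ≤ r₂ a)
    (h11 : ∑ a, r₁ a = 1) (h12 : ∑ a, r₂ a = 1) (lam mu : ℝ) (hlm : lam + mu = 1)
    (hcomb : ∀ a, lam * r₁ a + mu * r₂ a = π.q t0 s0 a) :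
    ∀ (t : ℕ) (j s : Fin N),
      lam * condProb M (modPol π t0 s0 r₁ h01 h11) j t s
        + mu * condProb M (modPol π t0 s0 r₂ h02 h12) j t s = condProb M π j t s := by
  intro t
  induction t with
  | zero =>
    intro j s
    show lam * (if s = j then (1:ℝ) else 0) + mu * (if s = j then (1:ℝ) else 0) = _
    show _ = (if s = j then (1:ℝ) else 0)
    split_ifs <;> linarith
  | succ t ih =>
    intro j s
    show lam * (∑ s', ∑ a, _) + mu * (∑ s', ∑ a, _) = ∑ s', ∑ a, _
    rw [Finset.mul_sum, Finset.mul_sum, ← Finset.sum_add_distrib]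
    refine Finset.sum_congr rfl fun s' _ => ?_
    rw [Finset.mul_sum, Finset.mul_sum, ← Finset.sum_add_distrib]
    refine Finset.sum_congr rfl fun a _ => ?_
    rcases lt_trichotomy t t0 with h | rfl | h
    · rw [modPol_condProb_le M π t0 s0 r₁ h01 h11 t h.le,
          modPol_condProb_le M π t0 s0 r₂ h02 h12 t h.le,
          modPol_q_ne π t0 s0 r₁ h01 h11 h.ne, modPol_q_ne π t0 s0 r₂ h02 h12 h.ne]
      rw [show lam * (condProb M π j t s' * π.q t s' a * M.p t s' a s)
            + mu * (condProb M π j t s' * π.q t s' a * M.p t s' a s)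
          = (lam + mu) * (condProb M π j t s' * π.q t s' a * M.p t s' a s) from by ring,
        hlm, one_mul]
    · rw [modPol_condProb_le M π t s0 r₁ h01 h11 t le_rfl,
          modPol_condProb_le M π t s0 r₂ h02 h12 t le_rfl]
      rcases eq_or_ne s' s0 with rfl | hs
      · rw [modPol_q_self, modPol_q_self, ← hcomb a]
        ring
      · rw [modPol_q_ne_s π t s0 r₁ h01 h11 hs, modPol_q_ne_s π t s0 r₂ h02 h12 hs]
        rw [show lam * (condProb M π j t s' * π.q t s' a * M.p t s' a s)
              + mu * (condProb M π j t s' * π.q t s' a * M.p t s' a s)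
            = (lam + mu) * (condProb M π j t s' * π.q t s' a * M.p t s' a s) from by ring,
          hlm, one_mul]
    · rw [modPol_q_ne π t0 s0 r₁ h01 h11 h.ne', modPol_q_ne π t0 s0 r₂ h02 h12 h.ne',
        ← ih j s']
      ring

lemma modPol_xvec_combo (M : MDP N (TT+2) k) (π : Policy N k) (t0 : ℕ) (s0 : Fin N)
    (r₁ r₂ : Fin (k s0) → ℝ) (h01 : ∀ a, 0 ≤ r₁ a) (h02 : ∀ a, 0 ≤ r₂ a)
    (h11 : ∑ a, r₁ a = 1) (h12 : ∑ a, r₂ a = 1) (lam mu : ℝ) (hlm : lam + mu = 1)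
    (hcomb : ∀ a, lam * r₁ a + mu * r₂ a = π.q t0 s0 a) :
    lam • xvec M (modPol π t0 s0 r₁ h01 h11) + mu • xvec M (modPol π t0 s0 r₂ h02 h12)
      = (xvec M π : FreqSpace N k TT) := by
  set π₁ := modPol π t0 s0 r₁ h01 h11
  set π₂ := modPol π t0 s0 r₂ h02 h12
  have hterm : ∀ (t : ℕ) (s : Fin N) (a : Fin (k s)),
      lam * xsa M π₁ t s a + mu * xsa M π₂ t s a = xsa M π t s a := by
    intro t s a
    unfold xsa
    rw [Finset.mul_sum, Finset.mul_sum, ← Finset.sum_add_distrib]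
    refine Finset.sum_congr rfl fun j _ => ?_
    rcases lt_trichotomy t t0 with h | rfl | h
    · rw [show π₁ = modPol π t0 s0 r₁ h01 h11 from rfl,
        show π₂ = modPol π t0 s0 r₂ h02 h12 from rfl,
        modPol_condProb_le M π t0 s0 r₁ h01 h11 t h.le,
        modPol_condProb_le M π t0 s0 r₂ h02 h12 t h.le,
        modPol_q_ne π t0 s0 r₁ h01 h11 h.ne, modPol_q_ne π t0 s0 r₂ h02 h12 h.ne]
      rw [show lam * (M.α j * condProb M π j t s * π.q t s a)
            + mu * (M.α j * condProb M π j t s * π.q t s a)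
          = (lam + mu) * (M.α j * condProb M π j t s * π.q t s a) from by ring, hlm, one_mul]
    · rw [show π₁ = modPol π t s0 r₁ h01 h11 from rfl,
        show π₂ = modPol π t s0 r₂ h02 h12 from rfl,
        modPol_condProb_le M π t s0 r₁ h01 h11 t le_rfl,
        modPol_condProb_le M π t s0 r₂ h02 h12 t le_rfl]
      rcases eq_or_ne s s0 with rfl | hs
      · rw [modPol_q_self, modPol_q_self, ← hcomb a]
        ring
      · rw [modPol_q_ne_s π t s0 r₁ h01 h11 hs, modPol_q_ne_s π t s0 r₂ h02 h12 hs]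
        rw [show lam * (M.α j * condProb M π j t s * π.q t s a)
              + mu * (M.α j * condProb M π j t s * π.q t s a)
            = (lam + mu) * (M.α j * condProb M π j t s * π.q t s a) from by ring, hlm, one_mul]
    · rw [show π₁ = modPol π t0 s0 r₁ h01 h11 from rfl,
        show π₂ = modPol π t0 s0 r₂ h02 h12 from rfl,
        modPol_q_ne π t0 s0 r₁ h01 h11 h.ne', modPol_q_ne π t0 s0 r₂ h02 h12 h.ne']
      have := modPol_combo M π t0 s0 r₁ r₂ h01 h02 h11 h12 lam mu hlm hcomb t j s
      linear_combination (M.α j * π.q t s a) * this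
  have htermT : ∀ s : Fin N, lam * xT M π₁ s + mu * xT M π₂ s = xT M π s := by
    intro s
    unfold xT
    rw [Finset.mul_sum, Finset.mul_sum, ← Finset.sum_add_distrib]
    refine Finset.sum_congr rfl fun j _ => ?_
    have := modPol_combo M π t0 s0 r₁ r₂ h01 h02 h11 h12 lam mu hlm hcomb (TT+2-1) j s
    linear_combination (M.α j) * this
  refine Prod.ext ?_ ?_
  · funext t s a
    simpa [xvec, Prod.fst_add, Prod.smul_fst, Pi.add_apply, Pi.smul_apply,
      smul_eq_mul] using hterm t s a
  · funext s
    simpa [xvec, Prod.snd_add, Prod.smul_snd, Pi.add_apply, Pi.smul_apply,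
      smul_eq_mul] using htermT s

end Proof14

/-- if the vMDP is regular then every basic feasible solution (vertex /
extreme point) of the state-action frequency polytope is non-degenerate: it has exactly
`m = N·(TT+2)` (i.e. `S·T`) nonzero components. -/
theorem vertex_nondegenerate (N TT : ℕ) (k : Fin N → ℕ) (hk : ∀ s, 1 ≤ k s)
    (M : MDP N (TT+2) k) (hreg : RegularProcess M)
    (x : FreqSpace N k TT) (hx : x ∈ Set.extremePoints ℝ (Pset M)) :
    (∑ t : Fin (TT+1), ∑ s : Fin N, ({a : Fin (k s) | x.1 t s a ≠ 0} : Set _).ncard) +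
        ({s : Fin N | x.2 s ≠ 0} : Set _).ncard = N * (TT + 2) := by
  obtain ⟨hx', hext⟩ := hx
  have hx' : inP M x := hx'
  set π := indPol M hk x hx' with hπdef
  have hF : ∀ (t : ℕ) (h : t < TT + 1) (s : Fin N),
      ∑ j, M.α j * condProb M π j t s = ∑ a, x.1 ⟨t, h⟩ s a := F_eq M hk x hx'
  have hFpos : ∀ (t : ℕ), t ≤ TT + 1 → ∀ s, 0 < ∑ j, M.α j * condProb M π j t s := by
    intro t ht s
    obtain ⟨j, hj⟩ := hreg π t s ht
    exact Finset.sum_pos' (fun i _ => mul_nonneg (M.α_pos i).le (condProb_nonneg M π i t s))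
      ⟨j, Finset.mem_univ j, mul_pos (M.α_pos j) hj⟩
  have hSpos : ∀ (t : Fin (TT+1)) (s : Fin N), 0 < ∑ a, x.1 t s a := by
    intro t s
    have h := hFpos t (by omega) s
    rw [hF t t.isLt s] at h
    exact h
  have hx2pos : ∀ s, 0 < x.2 s := by
    intro s
    have h := hFpos (TT+1) le_rfl s
    rwa [F_last M hk x hx' s] at h
  -- at most one nonzero action per (t, s)
  have huniq : ∀ (t : Fin (TT+1)) (s : Fin N) (a b : Fin (k s)),
      x.1 t s a ≠ 0 → x.1 t s b ≠ 0 → a = b := by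
    intro t s a b ha hb
    by_contra hab
    have hSp := hSpos t s
    have hqx : ∀ c, (∑ a', x.1 t s a') * π.q (t:ℕ) s c = x.1 t s c :=
      fun c => sum_mul_q M hk x hx' t t.isLt s c
    have hqpos : ∀ c, x.1 t s c ≠ 0 → 0 < π.q (t:ℕ) s c := by
      intro c hc
      rcases lt_or_eq_of_le (π.q_nonneg (t:ℕ) s c) with h | h
      · exact h
      · exact absurd (by rw [← hqx c, ← h, mul_zero]) hc
    have hqa : 0 < π.q (t:ℕ) s a := hqpos a ha
    have hqb : 0 < π.q (t:ℕ) s b := hqpos b hb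
    have hab2 : 0 < π.q (t:ℕ) s a + π.q (t:ℕ) s b := by linarith
    have hab2' : π.q (t:ℕ) s a + π.q (t:ℕ) s b ≠ 0 := hab2.ne'
    set r₁ : Fin (k s) → ℝ := fun c => π.q (t:ℕ) s c
        + (if c = a then π.q (t:ℕ) s b else 0) - (if c = b then π.q (t:ℕ) s b else 0) with hr₁
    set r₂ : Fin (k s) → ℝ := fun c => π.q (t:ℕ) s c
        - (if c = a then π.q (t:ℕ) s a else 0) + (if c = b then π.q (t:ℕ) s a else 0) with hr₂
    have h01 : ∀ c, 0 ≤ r₁ c := by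
      intro c
      simp only [hr₁]
      rcases eq_or_ne c a with rfl | hca
      · rw [if_pos rfl, if_neg hab]
        linarith
      · rw [if_neg hca]
        rcases eq_or_ne c b with rfl | hcb
        · rw [if_pos rfl]; linarith
        · rw [if_neg hcb]; have := π.q_nonneg (t:ℕ) s c; linarith
    have h02 : ∀ c, 0 ≤ r₂ c := by
      intro c
      simp only [hr₂]
      rcases eq_or_ne c a with rfl | hca
      · rw [if_pos rfl, if_neg hab]
        linarith
      · rw [if_neg hca]
        rcases eq_or_ne c b with rfl | hcb
        · rw [if_pos rfl]; linarith
        · rw [if_neg hcb]; have := π.q_nonneg (t:ℕ) s c; linarith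
    have hsum₁ : ∑ c, r₁ c = 1 := by
      simp only [hr₁, Finset.sum_sub_distrib, Finset.sum_add_distrib, Finset.sum_ite_eq',
        Finset.mem_univ, if_true, π.q_sum]
      ring
    have hsum₂ : ∑ c, r₂ c = 1 := by
      simp only [hr₂, Finset.sum_add_distrib, Finset.sum_sub_distrib, Finset.sum_ite_eq',
        Finset.mem_univ, if_true, π.q_sum]
      ring
    set lam := π.q (t:ℕ) s a / (π.q (t:ℕ) s a + π.q (t:ℕ) s b) with hlam
    set mu := π.q (t:ℕ) s b / (π.q (t:ℕ) s a + π.q (t:ℕ) s b) with hmu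
    have hlampos : 0 < lam := div_pos hqa hab2
    have hmupos : 0 < mu := div_pos hqb hab2
    have hlm : lam + mu = 1 := by
      rw [hlam, hmu, ← add_div, div_self hab2']
    have hcomb : ∀ c, lam * r₁ c + mu * r₂ c = π.q (t:ℕ) s c := by
      intro c
      simp only [hr₁, hr₂, hlam, hmu]
      rcases eq_or_ne c a with rfl | hca
      · rw [if_pos rfl, if_pos rfl, if_neg hab, if_neg hab,
          div_mul_eq_mul_div, div_mul_eq_mul_div, ← add_div, div_eq_iff hab2']
        ring
      · rw [if_neg hca, if_neg hca]
        rcases eq_or_ne c b with rfl | hcb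
        · rw [if_pos rfl, if_pos rfl,
            div_mul_eq_mul_div, div_mul_eq_mul_div, ← add_div, div_eq_iff hab2']
          ring
        · rw [if_neg hcb, if_neg hcb,
            div_mul_eq_mul_div, div_mul_eq_mul_div, ← add_div, div_eq_iff hab2']
          ring
    have hxvec : x = xvec M π := by
      refine Prod.ext ?_ ?_
      · funext t' s' a'
        exact (indPol_xsa M hk x hx' t' t'.isLt s' a' (hF t' t'.isLt s')).symm
      · funext s'
        exact (F_last M hk x hx' s').symm
    have hseg : x ∈ openSegment ℝ (xvec M (modPol π (t:ℕ) s r₁ h01 hsum₁))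
        (xvec M (modPol π (t:ℕ) s r₂ h02 hsum₂)) := by
      refine ⟨lam, mu, hlampos, hmupos, hlm, ?_⟩
      rw [modPol_xvec_combo M π (t:ℕ) s r₁ r₂ h01 h02 hsum₁ hsum₂ lam mu hlm hcomb]
      exact hxvec.symm
    have h1 := hext (xvec_mem_P M _) (xvec_mem_P M _) hseg
    have hcontr : (xvec M (modPol π (t:ℕ) s r₁ h01 hsum₁)).1 t s a = x.1 t s a := by rw [h1]
    have hL : (xvec M (modPol π (t:ℕ) s r₁ h01 hsum₁)).1 t s a
        = (∑ a', x.1 t s a') * r₁ a := by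
      show xsa M (modPol π (t:ℕ) s r₁ h01 hsum₁) (t:ℕ) s a = _
      unfold xsa
      have hc : ∀ j, condProb M (modPol π (t:ℕ) s r₁ h01 hsum₁) j (t:ℕ) s
          = condProb M π j (t:ℕ) s :=
        fun j => modPol_condProb_le M π (t:ℕ) s r₁ h01 hsum₁ (t:ℕ) le_rfl j s
      have hq : (modPol π (t:ℕ) s r₁ h01 hsum₁).q (t:ℕ) s a = r₁ a := by
        rw [modPol_q_self]
      simp_rw [hc, hq]
      rw [← Finset.sum_mul, hF (t:ℕ) t.isLt s]
    rw [hL, ← hqx a] at hcontr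
    simp only [hr₁, if_pos rfl, if_neg hab, if_true, sub_zero] at hcontr
    nlinarith [mul_pos hSp hqb, hcontr]
  -- counting
  have hsingle : ∀ (t : Fin (TT+1)) (s : Fin N),
      ({a : Fin (k s) | x.1 t s a ≠ 0} : Set _).ncard = 1 := by
    intro t s
    obtain ⟨a, ha⟩ : ∃ a, x.1 t s a ≠ 0 := by
      by_contra hcon
      push_neg at hcon
      have h := hSpos t s
      rw [Finset.sum_eq_zero (fun a _ => hcon a)] at h
      exact lt_irrefl 0 h
    have hset : {a : Fin (k s) | x.1 t s a ≠ 0} = {a} := by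
      ext b
      simp only [Set.mem_setOf_eq, Set.mem_singleton_iff]
      exact ⟨fun hb => huniq t s b a hb ha, fun hb => hb ▸ ha⟩
    rw [hset, Set.ncard_singleton]
  have hall : {s : Fin N | x.2 s ≠ 0} = Set.univ := by
    ext s
    simp [(hx2pos s).ne']
  simp only [hsingle, hall, Set.ncard_univ, Nat.card_eq_fintype_card, Fintype.card_fin,
    Finset.sum_const, Finset.card_univ, smul_eq_mul, mul_one]
  ring
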